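/- Let G be a finite group with symmetric generating set S, and suppose there is a constant c₀ > 0 such that for every F ∈ L²₀(G) (functions orthogonal to constants), sup_{γ∈S} |⟨γ.F − F, F⟩| ≥ c₀‖F‖². Then the Cheeger constant of the Cayley graph Cay(G, S) satisfies h(Cay(G,S)) ≥ c₀²/4. -/
import Mathlib


open scoped Classical

/-- a uniform inner-product gap on `L²₀(G)` gives the lower bound `c₀²/4` on the
Cheeger constant of the Cayley graph `Cay(G, S)`: for every nonempty `A ⊆ G` with
`|A| ≤ |G|/2`, the edge boundary satisfies `|∂A|/|A| ≥ c₀²/4`. -/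
theorem cheeger_constant_lower_bound
    {G : Type*} [Group G] [Fintype G]
    (S : Finset G)
    (hsym : ∀ γ ∈ S, γ⁻¹ ∈ S)
    (hgen : Subgroup.closure (S : Set G) = ⊤)
    (c₀ : ℝ) (hc₀ : 0 < c₀)
    (hgap : ∀ F : G → ℂ, (∑ x, F x) = 0 →
      ∃ γ ∈ S, c₀ * ∑ x, ‖F x‖ ^ 2 ≤
        ‖∑ x, (F (x * γ⁻¹) - F x) * (starRingEnd ℂ) (F x)‖) :
    ∀ A : Finset G, A.Nonempty → 2 * A.card ≤ Fintype.card G →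
      c₀ ^ 2 / 4 ≤
        (((A ×ˢ S).filter (fun q => q.1 * q.2 ∉ A)).card : ℝ) / (A.card : ℝ) := by
  intro A hA hA2
  classical
  have hk0 : 0 < A.card := Finset.card_pos.mpr hA
  have hkn : A.card ≤ Fintype.card G := Finset.card_le_univ A
  set nR : ℝ := (Fintype.card G : ℝ) with hnR
  set kR : ℝ := (A.card : ℝ) with hkR
  have hkR0 : 0 < kR := by rw [hkR]; exact_mod_cast hk0
  have h2k : 2 * kR ≤ nR := by rw [hkR, hnR]; exact_mod_cast hA2
  have hknR : kR ≤ nR := by linarith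
  have hnR0 : 0 < nR := lt_of_lt_of_le hkR0 hknR
  set F : G → ℂ := fun x => if x ∈ A then ((Fintype.card G : ℂ) - (A.card : ℂ)) else -(A.card : ℂ)
    with hF
  have hmemf : (Finset.univ.filter (fun x => x ∈ A)) = A := by ext x; simp
  have hcompl : (Finset.univ.filter (fun x => x ∉ A)) = Aᶜ := by ext x; simp
  have hsum : (∑ x, F x) = 0 := by
    rw [hF, Finset.sum_ite, hmemf, hcompl, Finset.sum_const, Finset.sum_const,
      Finset.card_compl, nsmul_eq_mul, nsmul_eq_mul, Nat.cast_sub hkn]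
    ring
  obtain ⟨γ, hγS, hineq⟩ := hgap F hsum
  have hnormsum : (∑ x, ‖F x‖ ^ 2) = kR * (nR - kR) * nR := by
    have h1 : ∀ x, ‖F x‖ ^ 2 = if x ∈ A then (nR - kR) ^ 2 else kR ^ 2 := by
      intro x
      by_cases hx : x ∈ A <;> simp only [hF, hx, if_true, if_false]
      · rw [show (Fintype.card G : ℂ) - (A.card : ℂ) = ((nR - kR : ℝ) : ℂ) by
          rw [hnR, hkR]; push_cast; ring]
        rw [Complex.norm_real, Real.norm_eq_abs, sq_abs]
      · rw [show -(A.card : ℂ) = ((-kR : ℝ) : ℂ) by rw [hkR]; push_cast; ring]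
        rw [Complex.norm_real, Real.norm_eq_abs, sq_abs, neg_pow]
        ring
    rw [Finset.sum_congr rfl (fun x _ => h1 x), Finset.sum_ite, hmemf, hcompl,
      Finset.sum_const, Finset.sum_const, Finset.card_compl, nsmul_eq_mul, nsmul_eq_mul,
      Nat.cast_sub hkn]
    rw [hnR, hkR]
    ring
  set P : Finset G := A.filter (fun x => x * γ⁻¹ ∉ A) with hP
  set Q : Finset G := A.filter (fun x => x * γ ∉ A) with hQ
  have hkey : (∑ x, (F (x * γ⁻¹) - F x) * (starRingEnd ℂ) (F x))
      = -(((nR * ((nR - kR) * P.card + kR * Q.card)) : ℝ) : ℂ) := by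
    have hpt : ∀ x, (F (x * γ⁻¹) - F x) * (starRingEnd ℂ) (F x)
        = (if x ∈ A ∧ x * γ⁻¹ ∉ A then
            -((Fintype.card G : ℂ) * ((Fintype.card G : ℂ) - (A.card : ℂ))) else 0)
        + (if x ∉ A ∧ x * γ⁻¹ ∈ A then -((Fintype.card G : ℂ) * (A.card : ℂ)) else 0) := by
      intro x
      by_cases hx : x ∈ A <;> by_cases hy : x * γ⁻¹ ∈ A <;>
        simp [hF, hx, hy, Complex.conj_natCast] <;> ring
    have hc1 : (Finset.univ.filter (fun x => x ∈ A ∧ x * γ⁻¹ ∉ A)) = P := by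
      ext x; simp [hP]
    have hc2 : (Finset.univ.filter (fun x => x ∉ A ∧ x * γ⁻¹ ∈ A)).card = Q.card := by
      apply Finset.card_bij' (fun x _ => x * γ⁻¹) (fun y _ => y * γ)
      · intro x hx
        simp only [Finset.mem_filter, Finset.mem_univ, true_and] at hx
        simp [hQ, hx.1, hx.2, inv_mul_cancel_right]
      · intro y hy
        simp only [hQ, Finset.mem_filter] at hy
        simp [hy.1, hy.2, mul_inv_cancel_right]
      · intro x _; simp
      · intro y _; simp
    rw [Finset.sum_congr rfl (fun x _ => hpt x), Finset.sum_add_distrib]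
    simp only [Finset.sum_ite, Finset.sum_const, Finset.sum_const_zero, add_zero,
      nsmul_eq_mul]
    rw [hc1, hc2]
    rw [hnR, hkR]
    push_cast
    ring
  have hnorm : ‖∑ x, (F (x * γ⁻¹) - F x) * (starRingEnd ℂ) (F x)‖
      = nR * ((nR - kR) * P.card + kR * Q.card) := by
    rw [hkey, norm_neg, Complex.norm_real, Real.norm_eq_abs, abs_of_nonneg]
    apply mul_nonneg hnR0.le
    apply add_nonneg
    · exact mul_nonneg (by linarith) (Nat.cast_nonneg _)
    · exact mul_nonneg hkR0.le (Nat.cast_nonneg _)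
  have hp0 : (0:ℝ) ≤ P.card := Nat.cast_nonneg _
  have hq0 : (0:ℝ) ≤ Q.card := Nat.cast_nonneg _
  have hpq : c₀ * kR ≤ (P.card : ℝ) + Q.card := by
    have h1 : c₀ * (kR * (nR - kR) * nR) ≤ nR * ((nR - kR) * P.card + kR * Q.card) := by
      rw [← hnormsum, ← hnorm]; exact hineq
    have hnk : kR ≤ nR - kR := by linarith
    have h3 : c₀ * kR * ((nR - kR) * nR) ≤ ((P.card : ℝ) + Q.card) * ((nR - kR) * nR) := by
      nlinarith [h1, mul_le_mul_of_nonneg_left (mul_le_mul_of_nonneg_right hnk hq0) hnR0.le]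
    have hpos : 0 < (nR - kR) * nR := by nlinarith
    exact le_of_mul_le_mul_right h3 hpos
  have hPk : (P.card : ℝ) ≤ kR := by
    rw [hkR]; exact_mod_cast Finset.card_le_card (Finset.filter_subset _ _)
  have hQk : (Q.card : ℝ) ≤ kR := by
    rw [hkR]; exact_mod_cast Finset.card_le_card (Finset.filter_subset _ _)
  have hc2 : c₀ ≤ 2 := by nlinarith
  set Bd := (A ×ˢ S).filter (fun q => q.1 * q.2 ∉ A) with hBd
  have himg : ∀ δ, δ ∈ S → (A.filter (fun x => x * δ ∉ A)).image (fun x => (x, δ)) ⊆ Bd := by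
    intro δ hδ y hy
    simp only [Finset.mem_image, Finset.mem_filter] at hy
    obtain ⟨x, ⟨hxA, hxB⟩, rfl⟩ := hy
    simp [hBd, Finset.mem_filter, Finset.mem_product, hxA, hδ, hxB]
  have hinj : ∀ δ : G, Function.Injective (fun x : G => (x, δ)) :=
    fun δ a b h => congrArg Prod.fst h
  have hBpq : (P.card : ℝ) + Q.card ≤ 2 * Bd.card := by
    by_cases hgg : γ⁻¹ = γ
    · have hPQ : P = Q := by rw [hP, hQ, hgg]
      have hPB : P.card ≤ Bd.card := by
        calc P.card = (P.image (fun x => (x, γ⁻¹))).card :=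
              (Finset.card_image_of_injective _ (hinj _)).symm
          _ ≤ Bd.card := Finset.card_le_card (himg γ⁻¹ (hsym γ hγS))
      rw [hPQ] at hPB ⊢
      have : (Q.card : ℝ) ≤ Bd.card := by exact_mod_cast hPB
      linarith
    · have hd : Disjoint (P.image (fun x => (x, γ⁻¹))) (Q.image (fun x => (x, γ))) := by
        rw [Finset.disjoint_left]
        rintro ⟨a, b⟩ h1 h2
        simp only [Finset.mem_image, Prod.mk.injEq] at h1 h2
        obtain ⟨x, _, hx1, hx2⟩ := h1
        obtain ⟨y, _, hy1, hy2⟩ := h2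
        exact hgg (hx2.trans hy2.symm)
      have hle : P.card + Q.card ≤ Bd.card := by
        rw [← Finset.card_image_of_injective P (hinj γ⁻¹),
          ← Finset.card_image_of_injective Q (hinj γ), ← Finset.card_union_of_disjoint hd]
        exact Finset.card_le_card
          (Finset.union_subset (himg γ⁻¹ (hsym γ hγS)) (himg γ hγS))
      have : (P.card : ℝ) + Q.card ≤ Bd.card := by exact_mod_cast hle
      linarith [Nat.cast_nonneg (α := ℝ) Bd.card]
  rw [div_le_div_iff₀ (by norm_num) hkR0]
  nlinarith [mul_nonneg (mul_nonneg (sub_nonneg.mpr hc2) hc₀.le) hkR0.le]
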